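/- Fix a production network A on the set of firms M = {1,…,m} in which every firm has a nonempty set of suppliers S_i, and fix parameters α ∈ (0,1), θ ∈ (0,1), λ ∈ [0,1), τ_p ∈ (0,1], τ_w ∈ (0,1]. Suppose (w, q, p, (α_{i,j})) is a steady state of the out-of-equilibrium dynamics with all wealths w_i, outputs q_i and prices p_i strictly positive, i.e. for every firm i ∈ M: (a) p_i q_i = Σ_{j∈N} α_{i,j} w_j (each price equals its market-clearing value); (b) q_i = f_i(α_{0,i} w_i / p_0, (α_{j,i} w_i / p_j)_{j∈S_i}) (output equals production from purchased inputs); (c) w_i = (1−λ) p_i q_i (expenses equal (1−λ) times revenues); (d) the household's wealth satisfies w_0 = p_0 + λ Σ_{i∈M} p_i q_i and the labor market clears, p_0 = Σ_{j∈N} α_{0,j} w_j; (e) the household's spending shares are the Cobb-Douglas shares, α_{i,0} = α_{0,i}; and (f) for each firm i, the vector of shares (α_{0,i}, (α_{j,i})_{j∈S_i}) maximizes f_i(a_0/p_0, (a_j/p_j)_{j∈S_i}) over nonnegative shares with a_0 + Σ_{j∈S_i} a_j = 1. Then, defining commodity flows x_{i,j} := α_{i,j} w_j / p_i (the quantity of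 good i bought by agent j), the triple (p, q, x) is a general equilibrium with monopolistic mark-up λ of the economy E(A): (1) markets clear, q_i = Σ_{j∈N} x_{i,j} for every i ∈ M; (2) the household's consumption bundle (x_{i,0})_{i∈M} maximizes the Cobb-Douglas utility Π_{i∈M} x_i^{α_{0,i}} subject to the budget constraint Σ_{i∈M} p_i x_i ≤ w_0; (3) for every firm i, the input bundle (x_{0,i}, (x_{j,i})_{j∈S_i}) minimizes input cost p_0 x_0 + Σ_{j∈S_i} p_j x_j among all bundles producing at least q_i; and (4) prices are a mark-up over unit production cost, p_i = (1 + λ/(1−λ)) · (p_0 x_{0,i} + Σ_{j∈S_i} p_j x_{j,i}) / q_i. Moreover, when λ = 0, each firm's plan (q_i, x_{·,i}) also maximizes profit p_i q − p_0 x_0 − Σ_{j∈S_i} p_j x_j over all feasible production plans, so the steady state is a competitive equilibrium. -/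

import Mathlib

/-- A strictly positive steady state of the out-of-equilibrium dynamics on a fixed
production network is a general equilibrium with monopolistic mark-up `lam` of the
economy `E(A)`; moreover, for `lam = 0` it is a competitive equilibrium.

Agents are indexed by `Fin (m+1)`: agent `0` is the representative household and the
remaining `m` indices are the firms. `S i` is the supplier set of firm `i`, `β` are the
household's Cobb-Douglas exponents, `f i` is firm `i`'s CES production function,
`w, q, p` are wealths, outputs and prices, and `sh i j` is the share of agent `j`'s
wealth spent on good `i` (so `sh i j * w j` is `j`'s nominal demand for good `i`, and
the commodity flow of good `i` to agent `j` is `x i j = sh i j * w j / p i`). -/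
theorem stmt_0
    (m : ℕ) (hm : 0 < m)
    (α θ lam τp τw : ℝ)
    (hα : α ∈ Set.Ioo (0 : ℝ) 1) (hθ : θ ∈ Set.Ioo (0 : ℝ) 1)
    (hlam : lam ∈ Set.Ico (0 : ℝ) 1)
    (hτp : τp ∈ Set.Ioc (0 : ℝ) 1) (hτw : τw ∈ Set.Ioc (0 : ℝ) 1)
    -- the production network: each firm has a nonempty set of (firm) suppliers
    (S : Fin (m + 1) → Finset (Fin (m + 1)))
    (hSne : ∀ i : Fin (m + 1), i ≠ 0 → (S i).Nonempty)
    (hSfirm : ∀ i j : Fin (m + 1), j ∈ S i → j ≠ 0)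
    -- the household's Cobb-Douglas preference shares
    (β : Fin (m + 1) → ℝ) (hβpos : ∀ i : Fin (m + 1), i ≠ 0 → 0 < β i)
    (hβsum : ∑ i ∈ Finset.univ.erase 0, β i = 1)
    -- the firms' CES production functions
    (f : Fin (m + 1) → (Fin (m + 1) → ℝ) → ℝ)
    (hf : ∀ i : Fin (m + 1), ∀ x : Fin (m + 1) → ℝ,
      f i x = x 0 ^ α * (∑ j ∈ S i, x j ^ θ) ^ ((1 - α) / θ))
    -- the steady state: wealths, outputs, prices and spending shares, all positive
    (w q p : Fin (m + 1) → ℝ) (sh : Fin (m + 1) → Fin (m + 1) → ℝ)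
    (hw : ∀ i, 0 < w i) (hq : ∀ i, 0 < q i) (hp : ∀ i, 0 < p i)
    (hshnn : ∀ i j, 0 ≤ sh i j)
    (hsh00 : sh 0 0 = 0)
    (hshsupp : ∀ i j : Fin (m + 1), j ≠ 0 → sh i j ≠ 0 → i = 0 ∨ i ∈ S j)
    (hshsum : ∀ j : Fin (m + 1), j ≠ 0 → sh 0 j + ∑ i ∈ S j, sh i j = 1)
    -- (a) each price equals its market-clearing value
    (ha : ∀ i : Fin (m + 1), i ≠ 0 → p i * q i = ∑ j, sh i j * w j)
    -- (b) output equals production from purchased inputs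
    (hb : ∀ i : Fin (m + 1), i ≠ 0 → q i = f i (fun j => sh j i * w i / p j))
    -- (c) expenses equal (1 - lam) times revenues
    (hc : ∀ i : Fin (m + 1), i ≠ 0 → w i = (1 - lam) * (p i * q i))
    -- (d) household wealth (labor income plus dividends) and labor-market clearing
    (hd1 : w 0 = p 0 + lam * ∑ i ∈ Finset.univ.erase 0, p i * q i)
    (hd2 : p 0 = ∑ j, sh 0 j * w j)
    -- (e) the household's spending shares are the Cobb-Douglas shares
    (he : ∀ i : Fin (m + 1), i ≠ 0 → sh i 0 = β i)
    -- (f) each firm's shares maximize output among nonnegative shares summing to 1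
    (hopt : ∀ i : Fin (m + 1), i ≠ 0 → ∀ a : Fin (m + 1) → ℝ, (∀ j, 0 ≤ a j) →
      a 0 + ∑ j ∈ S i, a j = 1 →
      f i (fun j => a j / p j) ≤ f i (fun j => sh j i / p j)) :
    -- (1) markets clear
    (∀ i : Fin (m + 1), i ≠ 0 → q i = ∑ j, sh i j * w j / p i) ∧
    -- (2) the household's bundle maximizes Cobb-Douglas utility in the budget set
    (∀ y : Fin (m + 1) → ℝ, (∀ i, 0 ≤ y i) →
      ∑ i ∈ Finset.univ.erase 0, p i * y i ≤ w 0 →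
      ∏ i ∈ Finset.univ.erase 0, y i ^ β i ≤
        ∏ i ∈ Finset.univ.erase 0, (sh i 0 * w 0 / p i) ^ β i) ∧
    -- (3) each firm's input bundle minimizes cost given its output
    (∀ i : Fin (m + 1), i ≠ 0 → ∀ z : Fin (m + 1) → ℝ, (∀ j, 0 ≤ z j) →
      q i ≤ f i z →
      p 0 * (sh 0 i * w i / p 0) + ∑ j ∈ S i, p j * (sh j i * w i / p j) ≤
        p 0 * z 0 + ∑ j ∈ S i, p j * z j) ∧
    -- (4) prices are a mark-up over unit production cost
    (∀ i : Fin (m + 1), i ≠ 0 →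
      p i = (1 + lam / (1 - lam)) *
        (p 0 * (sh 0 i * w i / p 0) + ∑ j ∈ S i, p j * (sh j i * w i / p j)) / q i) ∧
    -- (5) when lam = 0, each firm's plan maximizes profit: competitive equilibrium
    (lam = 0 → ∀ i : Fin (m + 1), i ≠ 0 → ∀ qq : ℝ, ∀ z : Fin (m + 1) → ℝ,
      (∀ j, 0 ≤ z j) → qq ≤ f i z →
      p i * qq - (p 0 * z 0 + ∑ j ∈ S i, p j * z j) ≤
        p i * q i -
          (p 0 * (sh 0 i * w i / p 0) + ∑ j ∈ S i, p j * (sh j i * w i / p j))) := by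

  obtain ⟨hα0, hα1⟩ := hα
  obtain ⟨hθ0, hθ1⟩ := hθ
  have hθne : θ ≠ 0 := ne_of_gt hθ0
  -- homogeneity of the CES production functions
  have hom : ∀ (i : Fin (m + 1)) (t : ℝ), 0 < t → ∀ x : Fin (m + 1) → ℝ,
      (∀ j, 0 ≤ x j) → f i (fun j => t * x j) = t * f i x := by
    intro i t ht x hx
    rw [hf, hf]
    have h1 : (t * x 0) ^ α = t ^ α * x 0 ^ α := Real.mul_rpow ht.le (hx 0)
    have h2 : ∀ j ∈ S i, (t * x j) ^ θ = t ^ θ * x j ^ θ := fun j _ =>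
      Real.mul_rpow ht.le (hx j)
    have hsnn : 0 ≤ ∑ j ∈ S i, x j ^ θ :=
      Finset.sum_nonneg fun j _ => Real.rpow_nonneg (hx j) θ
    rw [h1, Finset.sum_congr rfl h2, ← Finset.mul_sum,
      Real.mul_rpow (Real.rpow_nonneg ht.le θ) hsnn]
    have h3 : (t ^ θ) ^ ((1 - α) / θ) = t ^ (1 - α) := by
      rw [← Real.rpow_mul ht.le]
      congr 1
      field_simp
    have h4 : t ^ α * t ^ (1 - α) = t := by
      rw [← Real.rpow_add ht]
      norm_num
    rw [h3]
    calc t ^ α * x 0 ^ α * (t ^ (1 - α) * (∑ j ∈ S i, x j ^ θ) ^ ((1 - α) / θ))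
        = (t ^ α * t ^ (1 - α)) * (x 0 ^ α * (∑ j ∈ S i, x j ^ θ) ^ ((1 - α) / θ)) := by
          ring
      _ = t * (x 0 ^ α * (∑ j ∈ S i, x j ^ θ) ^ ((1 - α) / θ)) := by rw [h4]
  -- the unit-input value of the production function
  have hfq : ∀ i : Fin (m + 1), i ≠ 0 → f i (fun j => sh j i / p j) = q i / w i := by
    intro i hi
    have hxeq : (fun j => sh j i * w i / p j) = fun j => w i * (sh j i / p j) := by
      funext j; ring
    have := hb i hi
    rw [hxeq, hom i (w i) (hw i) _ (fun j => div_nonneg (hshnn j i) (hp j).le)] at this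
    rw [eq_div_iff (ne_of_gt (hw i))]
    linarith [this]
  -- key lemma: the steady-state input mix is efficient
  have hkey : ∀ i : Fin (m + 1), i ≠ 0 → ∀ z : Fin (m + 1) → ℝ, (∀ j, 0 ≤ z j) →
      f i z * w i ≤ q i * (p 0 * z 0 + ∑ j ∈ S i, p j * z j) := by
    intro i hi z hz
    set c := p 0 * z 0 + ∑ j ∈ S i, p j * z j with hcdef
    have hcnn : 0 ≤ c :=
      add_nonneg (mul_nonneg (hp 0).le (hz 0))
        (Finset.sum_nonneg fun j _ => mul_nonneg (hp j).le (hz j))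
    rcases eq_or_lt_of_le hcnn with hc0 | hcpos
    · -- cost zero forces zero output
      have hz0 : z 0 = 0 := by
        have h1 : 0 ≤ p 0 * z 0 := mul_nonneg (hp 0).le (hz 0)
        have h2 : 0 ≤ ∑ j ∈ S i, p j * z j :=
          Finset.sum_nonneg fun j _ => mul_nonneg (hp j).le (hz j)
        have : p 0 * z 0 = 0 := by linarith [hc0.symm ▸ (le_refl c)]
        rcases mul_eq_zero.mp this with h | h
        · exact absurd h (ne_of_gt (hp 0))
        · exact h
      have hfz : f i z = 0 := by
        rw [hf, hz0, Real.zero_rpow (ne_of_gt hα0), zero_mul]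
      rw [hfz, zero_mul, ← hc0, mul_zero]
    · -- positive cost: use the optimality of the shares
      have h1 := hopt i hi (fun j => p j * z j / c)
        (fun j => div_nonneg (mul_nonneg (hp j).le (hz j)) hcnn)
        (by rw [← Finset.sum_div, ← add_div, ← hcdef, div_self (ne_of_gt hcpos)])
      have hxeq : (fun j => p j * z j / c / p j) = fun j => c⁻¹ * z j := by
        funext j
        rw [div_div, mul_comm c (p j), ← div_div,
          mul_div_cancel_left₀ _ (ne_of_gt (hp j)), div_eq_inv_mul]
      rw [hxeq, hom i c⁻¹ (inv_pos.mpr hcpos) z hz, hfq i hi] at h1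
      have h2 : f i z / c ≤ q i / w i := by rwa [div_eq_inv_mul]
      exact (div_le_div_iff₀ hcpos (hw i)).mp h2
  -- the cost of the steady-state input bundle equals the firm's wealth
  have hcost : ∀ i : Fin (m + 1), i ≠ 0 →
      p 0 * (sh 0 i * w i / p 0) + ∑ j ∈ S i, p j * (sh j i * w i / p j) = w i := by
    intro i hi
    have h1 : ∀ j : Fin (m + 1), p j * (sh j i * w i / p j) = sh j i * w i := by
      intro j
      rw [← mul_div_assoc, mul_div_cancel_left₀ _ (ne_of_gt (hp j))]
    rw [h1 0, Finset.sum_congr rfl fun j _ => h1 j, ← Finset.sum_mul, ← add_mul,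
      hshsum i hi, one_mul]
  refine ⟨?_, ?_, ?_, ?_, ?_⟩
  · -- (1) markets clear
    intro i hi
    rw [← Finset.sum_div, ← ha i hi, mul_comm, mul_div_assoc,
      div_self (ne_of_gt (hp i)), mul_one]
  · -- (2) household utility maximization
    intro y hy hbud
    set s := (Finset.univ : Finset (Fin (m + 1))).erase 0 with hs
    have hmem : ∀ i ∈ s, i ≠ 0 := fun i hi => (Finset.mem_erase.mp hi).1
    have hw0 : 0 < w 0 := hw 0
    have hrhs : ∀ i ∈ s, (sh i 0 * w 0 / p i) ^ β i = (β i * w 0 / p i) ^ β i := by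
      intro i hi
      rw [he i (hmem i hi)]
    rw [Finset.prod_congr rfl hrhs]
    set c : Fin (m + 1) → ℝ := fun i => β i * w 0 / p i with hcdef
    have hcpos : ∀ i ∈ s, 0 < c i := fun i hi =>
      div_pos (mul_pos (hβpos i (hmem i hi)) hw0) (hp i)
    have hsplit : ∀ i ∈ s, y i ^ β i = (y i / c i) ^ β i * c i ^ β i := by
      intro i hi
      rw [← Real.mul_rpow (div_nonneg (hy i) (hcpos i hi).le) (hcpos i hi).le,
        div_mul_cancel₀ _ (ne_of_gt (hcpos i hi))]
    rw [Finset.prod_congr rfl hsplit, Finset.prod_mul_distrib]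
    have hgm : ∏ i ∈ s, (y i / c i) ^ β i ≤ ∑ i ∈ s, β i * (y i / c i) :=
      Real.geom_mean_le_arith_mean_weighted s β (fun i => y i / c i)
        (fun i hi => (hβpos i (hmem i hi)).le) hβsum
        (fun i hi => div_nonneg (hy i) (hcpos i hi).le)
    have hterm : ∀ i ∈ s, β i * (y i / c i) = p i * y i / w 0 := by
      intro i hi
      have hβi := hβpos i (hmem i hi)
      rw [hcdef]
      field_simp
    have hsum1 : ∑ i ∈ s, β i * (y i / c i) ≤ 1 := by
      rw [Finset.sum_congr rfl hterm, ← Finset.sum_div]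
      rw [div_le_one hw0]
      exact hbud
    have hprodnn : 0 ≤ ∏ i ∈ s, c i ^ β i :=
      Finset.prod_nonneg fun i hi => Real.rpow_nonneg (hcpos i hi).le _
    calc (∏ i ∈ s, (y i / c i) ^ β i) * ∏ i ∈ s, c i ^ β i
        ≤ 1 * ∏ i ∈ s, c i ^ β i :=
          mul_le_mul_of_nonneg_right (le_trans hgm hsum1) hprodnn
      _ = ∏ i ∈ s, c i ^ β i := one_mul _
  · -- (3) cost minimization
    intro i hi z hz hqz
    rw [hcost i hi]
    have h1 := hkey i hi z hz
    have h2 : q i * w i ≤ f i z * w i := mul_le_mul_of_nonneg_right hqz (hw i).le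
    have hqi := hq i
    nlinarith [hw i, hq i]
  · -- (4) mark-up pricing
    intro i hi
    rw [hcost i hi, hc i hi]
    have h1 : (1 : ℝ) - lam ≠ 0 := by linarith [hlam.2]
    rw [eq_div_iff (ne_of_gt (hq i))]
    field_simp
    ring
  · -- (5) competitive equilibrium when lam = 0
    intro hl0 i hi qq z hz hqz
    rw [hcost i hi]
    have hwi : w i = p i * q i := by rw [hc i hi, hl0]; ring
    have h1 := hkey i hi z hz
    rw [hwi] at h1
    have h2 : p i * f i z ≤ p 0 * z 0 + ∑ j ∈ S i, p j * z j := by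
      have hqi := hq i
      nlinarith
    have h3 : p i * qq ≤ p i * f i z := mul_le_mul_of_nonneg_left hqz (hp i).le
    linarith
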